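/- Under a polynomial dichotomy with projections P_m, constants D > 0 and λ ∈ (0,1), for each y = (y_n) ∈ Y_0 the sequence x_n = Σ_{k=1}^n (1/k) A(n,k) P_k y_k − Σ_{k=n+1}^∞ (1/k) A(n,k) Q_k y_k is well-defined, belongs to Y (i.e., sup_n ‖x_n‖_n < ∞), satisfies x_1 ∈ Im Q_1, and satisfies x_{n+1} − A_n x_n = (1/(n+1)) y_{n+1} for all n ∈ ℕ. -/

import Mathlib

open scoped BigOperators

variable {X : Type*} [NormedAddCommGroup X] [NormedSpace ℝ X]

/-- The cocycle generated by a sequence of bounded operators: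
`coc A n m = 𝓐(m,n) = A_{m-1} ⋯ A_n` for `m > n`, and `= Id` for `m ≤ n`. -/
def coc (A : ℕ → X →L[ℝ] X) (n : ℕ) : ℕ → X →L[ℝ] X
  | 0 => 1
  | m + 1 => if n ≤ m then (A m).comp (coc A n m) else 1

/-- The formal difference operator: `(T x)_1 = 0` and
`(T x)_{m+1} = (m+1)(x_{m+1} - A_m x_m)` for `m ≥ 1`. -/
noncomputable def TOp (A : ℕ → X →L[ℝ] X) (x : ℕ → X) : ℕ → X :=
  fun m => if m ≤ 1 then 0 else (m : ℝ) • (x m - A (m - 1) (x (m - 1)))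

/-- `N` is a family (indexed by `m ≥ 1`) of norms on `X`, each equivalent to `‖·‖`. -/
def NormFamily (N : ℕ → X → ℝ) : Prop :=
  ∀ m, 1 ≤ m →
    (∀ x y : X, N m (x + y) ≤ N m x + N m y) ∧
    (∀ (c : ℝ) (x : X), N m (c • x) = |c| * N m x) ∧
    (∃ c C : ℝ, 0 < c ∧ ∀ x : X, c * ‖x‖ ≤ N m x ∧ N m x ≤ C * ‖x‖)

/-- Membership in `Y`: `sup_{m ≥ 1} ‖x_m‖_m < ∞`. -/
def MemY (N : ℕ → X → ℝ) (x : ℕ → X) : Prop :=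
  ∃ S : ℝ, ∀ m, 1 ≤ m → N m (x m) ≤ S

/-- Membership in `Y₀ = Y_{{0}}`: bounded and `x_1 = 0`. -/
def MemY0 (N : ℕ → X → ℝ) (x : ℕ → X) : Prop := x 1 = 0 ∧ MemY N x

/-- Membership in `Y_Z`: bounded and `x_1 ∈ Z`. -/
def MemYZ (N : ℕ → X → ℝ) (Z : Set X) (x : ℕ → X) : Prop := x 1 ∈ Z ∧ MemY N x

/-- Membership in the domain `𝒟(T_Z)`: `x ∈ Y_Z` and
`sup_{m ≥ 1} (m+1)‖x_{m+1} - A_m x_m‖_{m+1} < ∞`. -/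
def MemD (A : ℕ → X →L[ℝ] X) (N : ℕ → X → ℝ) (Z : Set X) (x : ℕ → X) : Prop :=
  MemYZ N Z x ∧ MemY N (TOp A x)

/-- Polynomial dichotomy (with given projections and constants) with respect to the
sequence of norms `N`.  The bound along the unstable direction is stated in the
equivalent "forward" form: `‖u‖_m ≤ D (m/n)^λ ‖𝓐(n,m)u‖_n` for `u ∈ Ker P_m`, `m ≤ n`. -/
def PolyDichWith (A : ℕ → X →L[ℝ] X) (N : ℕ → X → ℝ) (P : ℕ → X →L[ℝ] X)
    (D lam : ℝ) : Prop :=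
  (∀ m, 1 ≤ m → (P m).comp (P m) = P m) ∧
  (∀ m, 1 ≤ m → (A m).comp (P m) = (P (m + 1)).comp (A m)) ∧
  (∀ m, 1 ≤ m → ∀ y, P (m + 1) y = 0 → ∃! x, P m x = 0 ∧ A m x = y) ∧
  (∀ m n, 1 ≤ n → n ≤ m → ∀ x : X,
      N m (coc A n m (P n x)) ≤ D * (((m : ℝ) / (n : ℝ)) ^ (-lam)) * N n x) ∧
  (∀ m n, 1 ≤ m → m ≤ n → ∀ u : X, P m u = 0 →
      N m u ≤ D * (((m : ℝ) / (n : ℝ)) ^ lam) * N n (coc A m n u))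

/-- `(A_m)` admits a polynomial dichotomy with respect to the sequence of norms `N`. -/
def PolyDich (A : ℕ → X →L[ℝ] X) (N : ℕ → X → ℝ) : Prop :=
  ∃ (P : ℕ → X →L[ℝ] X) (D lam : ℝ), 0 < D ∧ 0 < lam ∧ PolyDichWith A N P D lam

lemma coc_self' (A : ℕ → X →L[ℝ] X) (n : ℕ) (u : X) : coc A n n u = u := by
  cases n with
  | zero => rfl
  | succ m => simp [coc]

lemma coc_succ' (A : ℕ → X →L[ℝ] X) {n m : ℕ} (h : n ≤ m) (u : X) :
    coc A n (m + 1) u = A m (coc A n m u) := by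
  simp [coc, h]

lemma coc_shift' (A : ℕ → X →L[ℝ] X) {n k : ℕ} (h : n + 1 ≤ k) (u : X) :
    coc A n k u = coc A (n + 1) k (A n u) := by
  induction k, h using Nat.le_induction with
  | base => rw [coc_succ' A le_rfl, coc_self', coc_self']
  | succ k hk ih => rw [coc_succ' A (by omega), coc_succ' A hk, ih]

lemma rpow_mvt {p a b : ℝ} (ha : 0 < a) (hab : a < b) :
    ∃ c, a < c ∧ c < b ∧ b ^ p - a ^ p = p * c ^ (p - 1) * (b - a) := by
  have hcont : ContinuousOn (fun t : ℝ => t ^ p) (Set.Icc a b) := fun t ht =>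
    (Real.hasDerivAt_rpow_const (p := p)
      (Or.inl (ne_of_gt (lt_of_lt_of_le ha ht.1)))).continuousAt.continuousWithinAt
  have hderiv : ∀ t ∈ Set.Ioo a b, HasDerivAt (fun t : ℝ => t ^ p) (p * t ^ (p - 1)) t :=
    fun t ht => Real.hasDerivAt_rpow_const (Or.inl (ne_of_gt (ha.trans ht.1)))
  obtain ⟨c, hc, hceq⟩ := exists_hasDerivAt_eq_slope (fun t : ℝ => t ^ p)
    (fun t => p * t ^ (p - 1)) hab hcont hderiv
  refine ⟨c, hc.1, hc.2, ?_⟩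
  rw [hceq]
  exact (div_mul_cancel₀ _ (sub_ne_zero.2 hab.ne')).symm

lemma rpow_mvt_low {q a b : ℝ} (hq0 : 0 < q) (hq1 : q ≤ 1) (ha : 0 < a) (hab : a < b) :
    q * b ^ (q - 1) * (b - a) ≤ b ^ q - a ^ q := by
  obtain ⟨c, hac, hcb, heq⟩ := rpow_mvt (p := q) ha hab
  have h1 : b ^ (q - 1) ≤ c ^ (q - 1) :=
    Real.rpow_le_rpow_of_nonpos (ha.trans hac) hcb.le (by linarith)
  have h3 : q * b ^ (q - 1) * (b - a) ≤ q * c ^ (q - 1) * (b - a) :=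
    mul_le_mul_of_nonneg_right (mul_le_mul_of_nonneg_left h1 hq0.le) (by linarith)
  linarith

lemma rpow_mvt_neg {q a b : ℝ} (hq0 : 0 < q) (ha : 0 < a) (hab : a < b) :
    q * b ^ (-q - 1) * (b - a) ≤ a ^ (-q) - b ^ (-q) := by
  obtain ⟨c, hac, hcb, heq⟩ := rpow_mvt (p := -q) ha hab
  have h1 : b ^ (-q - 1) ≤ c ^ (-q - 1) :=
    Real.rpow_le_rpow_of_nonpos (ha.trans hac) hcb.le (by linarith)
  have h3 : q * b ^ (-q - 1) * (b - a) ≤ q * c ^ (-q - 1) * (b - a) :=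
    mul_le_mul_of_nonneg_right (mul_le_mul_of_nonneg_left h1 hq0.le) (by linarith)
  nlinarith

lemma sum_rpow_Icc_le {lam : ℝ} (h0 : 0 < lam) (h1 : lam ≤ 1) :
    ∀ n : ℕ, 1 ≤ n → ∑ k ∈ Finset.Icc 1 n, ((k : ℝ)) ^ (lam - 1) ≤ (n : ℝ) ^ lam / lam := by
  intro n hn
  induction n, hn using Nat.le_induction with
  | base =>
    rw [Finset.Icc_self, Finset.sum_singleton]
    simp only [Nat.cast_one, Real.one_rpow]
    rw [le_div_iff₀ h0, one_mul]
    exact h1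
  | succ n hn ih =>
    rw [Finset.sum_Icc_succ_top (by omega)]
    push_cast
    have key := rpow_mvt_low h0 h1 (a := (n : ℝ)) (b := (n : ℝ) + 1)
      (by exact_mod_cast hn) (by linarith)
    have h2 : ((n : ℝ) + 1) ^ (lam - 1) ≤ (((n : ℝ) + 1) ^ lam - (n : ℝ) ^ lam) / lam := by
      rw [le_div_iff₀ h0]; nlinarith
    have h4 : (n : ℝ) ^ lam / lam + (((n : ℝ) + 1) ^ lam - (n : ℝ) ^ lam) / lam
        = ((n : ℝ) + 1) ^ lam / lam := by ring
    linarith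

lemma sum_rpow_Ioc_le {lam : ℝ} (h0 : 0 < lam) (n : ℕ) (hn : 1 ≤ n) (M : ℕ) :
    ∑ k ∈ Finset.Ioc n M, ((k : ℝ)) ^ (-1 - lam) ≤ (n : ℝ) ^ (-lam) / lam := by
  rcases le_or_gt M n with h | h
  · rw [Finset.Ioc_eq_empty (by omega), Finset.sum_empty]
    positivity
  · have key : ∀ M : ℕ, n ≤ M →
        ∑ k ∈ Finset.Ioc n M, ((k : ℝ)) ^ (-1 - lam)
          ≤ ((n : ℝ) ^ (-lam) - (M : ℝ) ^ (-lam)) / lam := by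
      intro M hM
      induction M, hM using Nat.le_induction with
      | base => simp
      | succ M hM ih =>
        rw [Finset.sum_Ioc_succ_top hM]
        push_cast
        have hMpos : (0 : ℝ) < (M : ℝ) := by exact_mod_cast (by omega : 0 < M)
        have key := rpow_mvt_neg h0 (a := (M : ℝ)) (b := (M : ℝ) + 1) hMpos (by linarith)
        have h2 : ((M : ℝ) + 1) ^ (-1 - lam) ≤ ((M : ℝ) ^ (-lam) - ((M : ℝ) + 1) ^ (-lam)) / lam := by
          rw [le_div_iff₀ h0, show (-1 : ℝ) - lam = -lam - 1 from by ring]; nlinarith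
        have h4 : ((n : ℝ) ^ (-lam) - (M : ℝ) ^ (-lam)) / lam
            + ((M : ℝ) ^ (-lam) - ((M : ℝ) + 1) ^ (-lam)) / lam
            = ((n : ℝ) ^ (-lam) - ((M : ℝ) + 1) ^ (-lam)) / lam := by ring
        linarith
    have h2 := key M (by omega)
    have h3 : (0 : ℝ) ≤ (M : ℝ) ^ (-lam) := Real.rpow_nonneg (by positivity) _
    exact h2.trans ((div_le_div_iff_of_pos_right h0).2 (by linarith))

/-- under a polynomial dichotomy with constants `D > 0`, `λ ∈ (0,1)`, for any
`y ∈ Y₀` the sequence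
`x_n = ∑_{k=1}^n (1/k) 𝓐(n,k) P_k y_k − ∑_{k=n+1}^∞ (1/k) 𝓐(n,k) Q_k y_k`
is well defined (the tail series is summable), bounded in the norms `‖·‖_n`,
has `x_1 ∈ Im Q₁`, and satisfies `x_{n+1} − A_n x_n = (1/(n+1)) y_{n+1}` for all `n ≥ 1`.
Here `B n k` denotes the inverse `𝓐(n,k) = (𝓐(k,n)|_{Ker P_n})^{-1} : Ker P_k → Ker P_n`. -/
theorem stmt5 [CompleteSpace X] (A : ℕ → X →L[ℝ] X) (N : ℕ → X → ℝ)
    (hN : NormFamily N) (P : ℕ → X →L[ℝ] X) (D lam : ℝ)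
    (hD : 0 < D) (hlam0 : 0 < lam) (hlam1 : lam < 1)
    (hdich : PolyDichWith A N P D lam)
    (B : ℕ → ℕ → X → X)
    (hB : ∀ n k, 1 ≤ n → n ≤ k → ∀ v : X, P k v = 0 →
      P n (B n k v) = 0 ∧ coc A n k (B n k v) = v)
    (y : ℕ → X) (hy : MemY0 N y) :
    let x : ℕ → X := fun n =>
      (∑ k ∈ Finset.Icc 1 n, ((k : ℝ))⁻¹ • coc A k n (P k (y k))) -
        ∑' k : ℕ, if n + 1 ≤ k then ((k : ℝ))⁻¹ • B n k (y k - P k (y k)) else 0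
    (∀ n, 1 ≤ n → Summable fun k : ℕ =>
        if n + 1 ≤ k then ((k : ℝ))⁻¹ • B n k (y k - P k (y k)) else (0 : X)) ∧
    MemY N x ∧
    x 1 ∈ Set.range (fun v : X => v - P 1 v) ∧
    (∀ n, 1 ≤ n → x (n + 1) - A n (x n) = (((n : ℝ) + 1))⁻¹ • y (n + 1)) := by
  classical
  obtain ⟨hproj, hcomm, hinv, hst, hun⟩ := hdich
  obtain ⟨hy1, Sy, hSy⟩ := hy
  -- norm family helpers
  have hadd : ∀ m, 1 ≤ m → ∀ a b : X, N m (a + b) ≤ N m a + N m b := fun m hm => (hN m hm).1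
  have hsmul : ∀ m, 1 ≤ m → ∀ (c : ℝ) (a : X), N m (c • a) = |c| * N m a :=
    fun m hm => (hN m hm).2.1
  have hzero : ∀ m, 1 ≤ m → N m 0 = 0 := by
    intro m hm
    have := hsmul m hm 0 0
    simpa using this
  have hneg : ∀ m, 1 ≤ m → ∀ a : X, N m (-a) = N m a := by
    intro m hm a
    have := hsmul m hm (-1) a
    simpa using this
  have hnonneg : ∀ m, 1 ≤ m → ∀ a : X, 0 ≤ N m a := by
    intro m hm a
    obtain ⟨c, C, hc, hb⟩ := (hN m hm).2.2
    exact le_trans (mul_nonneg hc.le (norm_nonneg a)) (hb a).1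
  have hsum_le : ∀ m, 1 ≤ m → ∀ (s : Finset ℕ) (f : ℕ → X),
      N m (∑ k ∈ s, f k) ≤ ∑ k ∈ s, N m (f k) := by
    intro m hm s f
    induction s using Finset.induction with
    | empty => simp [hzero m hm]
    | insert _ _ h ih =>
      rw [Finset.sum_insert h, Finset.sum_insert h]
      exact (hadd m hm _ _).trans (by linarith)
  have hcont : ∀ m, 1 ≤ m → Continuous (N m) := by
    intro m hm
    obtain ⟨c, C, hc, hb⟩ := (hN m hm).2.2
    have key : ∀ u v : X, N m u - N m v ≤ C * ‖u - v‖ := by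
      intro u v
      have h1 : N m u ≤ N m (u - v) + N m v := by
        simpa using hadd m hm (u - v) v
      have h2 : N m (u - v) ≤ C * ‖u - v‖ := (hb _).2
      linarith
    have lip : LipschitzWith (Real.toNNReal C) (N m) := by
      apply LipschitzWith.of_dist_le_mul
      intro a b
      rw [Real.dist_eq, dist_eq_norm]
      have h1 := key a b
      have h2 := key b a
      rw [norm_sub_rev] at h2
      have h3 : C * ‖a - b‖ ≤ (Real.toNNReal C) * ‖a - b‖ :=
        mul_le_mul_of_nonneg_right (Real.le_coe_toNNReal C) (norm_nonneg _)
      rw [abs_sub_le_iff]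
      constructor <;> linarith
    exact lip.continuous
  have hNtsum_le : ∀ m, 1 ≤ m → ∀ (f : ℕ → X), Summable f → ∀ b : ℝ,
      (∀ j : ℕ, N m (∑ k ∈ Finset.range j, f k) ≤ b) → N m (∑' k, f k) ≤ b := by
    intro m hm f hf b hb
    have h1 := hf.hasSum.tendsto_sum_nat
    exact le_of_tendsto (((hcont m hm).tendsto _).comp h1) (Filter.Eventually.of_forall hb)
  have hSy0 : 0 ≤ Sy := le_trans (hnonneg 1 le_rfl (y 1)) (hSy 1 le_rfl)
  -- projection helpers
  have hPA : ∀ m, 1 ≤ m → ∀ v : X, P (m + 1) (A m v) = A m (P m v) :=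
    fun m hm v => (DFunLike.congr_fun (hcomm m hm) v).symm
  have hPP : ∀ m, 1 ≤ m → ∀ v : X, P m (P m v) = P m v :=
    fun m hm v => DFunLike.congr_fun (hproj m hm) v
  have hQker : ∀ k : ℕ, 1 ≤ k → P k (y k - P k (y k)) = 0 := by
    intro k hk
    rw [map_sub, hPP k hk, sub_self]
  have hcocP : ∀ n k, 1 ≤ n → n ≤ k → ∀ v : X,
      P k (coc A n k v) = coc A n k (P n v) := by
    intro n k hn hk v
    induction k, hk using Nat.le_induction with
    | base => rw [coc_self', coc_self']
    | succ k hk ih => rw [coc_succ' A hk, coc_succ' A hk, hPA k (hn.trans hk), ih]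
  have hcocinj : ∀ n k, 1 ≤ n → n ≤ k → ∀ w w' : X, P n w = 0 → P n w' = 0 →
      coc A n k w = coc A n k w' → w = w' := by
    intro n k hn hk
    induction k, hk using Nat.le_induction with
    | base =>
      intro w w' _ _ h
      rwa [coc_self', coc_self'] at h
    | succ k hk ih =>
      intro w w' hw hw' h
      rw [coc_succ' A hk, coc_succ' A hk] at h
      have hku : P k (coc A n k w) = 0 := by rw [hcocP n k hn hk, hw, map_zero]
      have hku' : P k (coc A n k w') = 0 := by rw [hcocP n k hn hk, hw', map_zero]
      have hker : P (k + 1) (A k (coc A n k w)) = 0 := by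
        rw [hPA k (hn.trans hk), hku, map_zero]
      obtain ⟨z, hz, hzu⟩ := hinv k (hn.trans hk) (A k (coc A n k w)) hker
      have e1 := hzu _ ⟨hku, rfl⟩
      have e2 := hzu _ ⟨hku', h.symm⟩
      exact ih w w' hw hw' (e1.trans e2.symm)
  have hBstep : ∀ n k, 1 ≤ n → n + 1 ≤ k →
      A n (B n k (y k - P k (y k))) = B (n + 1) k (y k - P k (y k)) := by
    intro n k hn hk
    have hQ := hQker k (by omega)
    obtain ⟨h1, h2⟩ := hB n k hn (by omega) _ hQ
    obtain ⟨h1', h2'⟩ := hB (n + 1) k (by omega) hk _ hQ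
    refine hcocinj (n + 1) k (by omega) hk _ _ ?_ h1' ?_
    · rw [hPA n hn, h1, map_zero]
    · rw [← coc_shift' A hk, h2, h2']
  have hBself : ∀ k : ℕ, 1 ≤ k → B k k (y k - P k (y k)) = y k - P k (y k) := by
    intro k hk
    have h2 := (hB k k hk le_rfl _ (hQker k hk)).2
    rwa [coc_self'] at h2
  -- estimates
  have hNP : ∀ k : ℕ, 1 ≤ k → N k (P k (y k)) ≤ D * Sy := by
    intro k hk
    have h := hst k k hk le_rfl (y k)
    have hk0 : ((k : ℝ)) ≠ 0 := by positivity
    rw [coc_self', div_self hk0, Real.one_rpow, mul_one] at h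
    exact h.trans (mul_le_mul_of_nonneg_left (hSy k hk) hD.le)
  have hNQ : ∀ k : ℕ, 1 ≤ k → N k (y k - P k (y k)) ≤ (1 + D) * Sy := by
    intro k hk
    have h := hadd k hk (y k) (-(P k (y k)))
    rw [hneg k hk] at h
    calc N k (y k - P k (y k)) = N k (y k + -(P k (y k))) := by rw [sub_eq_add_neg]
      _ ≤ N k (y k) + N k (P k (y k)) := h
      _ ≤ Sy + D * Sy := add_le_add (hSy k hk) (hNP k hk)
      _ = (1 + D) * Sy := by ring
  have hK0 : 0 ≤ D * ((1 + D) * Sy) :=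
    mul_nonneg hD.le (mul_nonneg (by linarith) hSy0)
  have hterm : ∀ n : ℕ, 1 ≤ n → ∀ k : ℕ, n + 1 ≤ k →
      N n (((k : ℝ))⁻¹ • B n k (y k - P k (y k)))
        ≤ (D * ((1 + D) * Sy)) * ((n : ℝ) ^ lam * (k : ℝ) ^ (-1 - lam)) := by
    intro n hn k hk
    have hk1 : 1 ≤ k := by omega
    have hkpos : (0 : ℝ) < (k : ℝ) := by exact_mod_cast (by omega : 0 < k)
    have hnpos : (0 : ℝ) < (n : ℝ) := by exact_mod_cast (by omega : 0 < n)
    obtain ⟨hker, hcoc⟩ := hB n k hn (by omega) _ (hQker k hk1)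
    have h := hun n k hn (by omega) _ hker
    rw [hcoc] at h
    have hsm := hsmul n hn ((k : ℝ))⁻¹ (B n k (y k - P k (y k)))
    rw [abs_of_nonneg (by positivity)] at hsm
    have hlampos : (0 : ℝ) ≤ ((n : ℝ) / (k : ℝ)) ^ lam := Real.rpow_nonneg (by positivity) _
    have e : (k : ℝ)⁻¹ * (((n : ℝ) / (k : ℝ)) ^ lam)
        = (n : ℝ) ^ lam * (k : ℝ) ^ (-1 - lam) := by
      rw [Real.div_rpow hnpos.le hkpos.le,
        show (-1 - lam : ℝ) = -(1 + lam) from by ring, Real.rpow_neg hkpos.le,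
        Real.rpow_add hkpos, Real.rpow_one]
      have h1 : ((k : ℝ)) ^ lam ≠ 0 := (Real.rpow_pos_of_pos hkpos lam).ne'
      field_simp
    calc N n (((k : ℝ))⁻¹ • B n k (y k - P k (y k)))
        = (k : ℝ)⁻¹ * N n (B n k (y k - P k (y k))) := hsm
      _ ≤ (k : ℝ)⁻¹ * (D * (((n : ℝ) / (k : ℝ)) ^ lam) * N k (y k - P k (y k))) :=
          mul_le_mul_of_nonneg_left h (by positivity)
      _ ≤ (k : ℝ)⁻¹ * (D * (((n : ℝ) / (k : ℝ)) ^ lam) * ((1 + D) * Sy)) := by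
          refine mul_le_mul_of_nonneg_left ?_ (by positivity)
          exact mul_le_mul_of_nonneg_left (hNQ k hk1) (by positivity)
      _ = (D * ((1 + D) * Sy)) * ((k : ℝ)⁻¹ * (((n : ℝ) / (k : ℝ)) ^ lam)) := by ring
      _ = (D * ((1 + D) * Sy)) * ((n : ℝ) ^ lam * (k : ℝ) ^ (-1 - lam)) := by rw [e]
  have hstterm : ∀ n : ℕ, 1 ≤ n → ∀ k : ℕ, 1 ≤ k → k ≤ n →
      N n (((k : ℝ))⁻¹ • coc A k n (P k (y k)))
        ≤ (D * Sy) * ((n : ℝ) ^ (-lam) * (k : ℝ) ^ (lam - 1)) := by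
    intro n hn k hk1 hkn
    have hkpos : (0 : ℝ) < (k : ℝ) := by exact_mod_cast (by omega : 0 < k)
    have hnpos : (0 : ℝ) < (n : ℝ) := by exact_mod_cast (by omega : 0 < n)
    have h := hst n k hk1 hkn (y k)
    have hsm := hsmul n hn ((k : ℝ))⁻¹ (coc A k n (P k (y k)))
    rw [abs_of_nonneg (by positivity)] at hsm
    have hlampos : (0 : ℝ) ≤ ((n : ℝ) / (k : ℝ)) ^ (-lam) := Real.rpow_nonneg (by positivity) _
    have e : (k : ℝ)⁻¹ * (((n : ℝ) / (k : ℝ)) ^ (-lam))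
        = (n : ℝ) ^ (-lam) * (k : ℝ) ^ (lam - 1) := by
      rw [Real.div_rpow hnpos.le hkpos.le, Real.rpow_neg hnpos.le, Real.rpow_neg hkpos.le,
        Real.rpow_sub hkpos, Real.rpow_one]
      have h1 : ((k : ℝ)) ^ lam ≠ 0 := (Real.rpow_pos_of_pos hkpos lam).ne'
      have h2 : ((n : ℝ)) ^ lam ≠ 0 := (Real.rpow_pos_of_pos hnpos lam).ne'
      field_simp
    calc N n (((k : ℝ))⁻¹ • coc A k n (P k (y k)))
        = (k : ℝ)⁻¹ * N n (coc A k n (P k (y k))) := hsm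
      _ ≤ (k : ℝ)⁻¹ * (D * (((n : ℝ) / (k : ℝ)) ^ (-lam)) * N k (y k)) :=
          mul_le_mul_of_nonneg_left h (by positivity)
      _ ≤ (k : ℝ)⁻¹ * (D * (((n : ℝ) / (k : ℝ)) ^ (-lam)) * Sy) := by
          refine mul_le_mul_of_nonneg_left ?_ (by positivity)
          exact mul_le_mul_of_nonneg_left (hSy k hk1) (by positivity)
      _ = (D * Sy) * ((k : ℝ)⁻¹ * (((n : ℝ) / (k : ℝ)) ^ (-lam))) := by ring
      _ = (D * Sy) * ((n : ℝ) ^ (-lam) * (k : ℝ) ^ (lam - 1)) := by rw [e]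
  set t : ℕ → ℕ → X :=
    fun n k => if n + 1 ≤ k then ((k : ℝ))⁻¹ • B n k (y k - P k (y k)) else 0 with ht
  have htN : ∀ n : ℕ, 1 ≤ n → ∀ k : ℕ,
      N n (t n k) ≤ if n + 1 ≤ k then
        (D * ((1 + D) * Sy)) * ((n : ℝ) ^ lam * (k : ℝ) ^ (-1 - lam)) else 0 := by
    intro n hn k
    by_cases hk : n + 1 ≤ k
    · rw [if_pos hk, ht]
      simpa only [if_pos hk] using hterm n hn k hk
    · rw [if_neg hk, ht]
      simp only [if_neg hk]
      rw [hzero n hn]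
  have hsummable : ∀ n, 1 ≤ n → Summable (t n) := by
    intro n hn
    obtain ⟨c, C, hc, hb⟩ := (hN n hn).2.2
    apply Summable.of_norm_bounded
      (g := fun k : ℕ => (c⁻¹ * ((D * ((1 + D) * Sy)) * (n : ℝ) ^ lam)) * (k : ℝ) ^ (-1 - lam))
    · exact (Real.summable_nat_rpow.2 (by linarith)).mul_left _
    · intro k
      have h1 : c * ‖t n k‖ ≤ N n (t n k) := (hb _).1
      have h2 := htN n hn k
      have hnl : (0 : ℝ) ≤ (n : ℝ) ^ lam := Real.rpow_nonneg (by positivity) _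
      have hkl : (0 : ℝ) ≤ (k : ℝ) ^ (-1 - lam) := Real.rpow_nonneg (by positivity) _
      have h3 : N n (t n k) ≤ (D * ((1 + D) * Sy)) * ((n : ℝ) ^ lam * (k : ℝ) ^ (-1 - lam)) := by
        rcases le_or_gt (n + 1) k with hk | hk
        · rw [if_pos hk] at h2; exact h2
        · refine le_trans (h2.trans_eq (if_neg (by omega : ¬ n + 1 ≤ k))) ?_
          exact mul_nonneg hK0 (mul_nonneg hnl hkl)
      calc ‖t n k‖ = c⁻¹ * (c * ‖t n k‖) := by field_simp
        _ ≤ c⁻¹ * ((D * ((1 + D) * Sy)) * ((n : ℝ) ^ lam * (k : ℝ) ^ (-1 - lam))) :=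
            mul_le_mul_of_nonneg_left (h1.trans h3) (by positivity)
        _ = (c⁻¹ * ((D * ((1 + D) * Sy)) * (n : ℝ) ^ lam)) * (k : ℝ) ^ (-1 - lam) := by ring
  have htail : ∀ n, 1 ≤ n → ∀ j : ℕ,
      N n (∑ k ∈ Finset.range j, t n k) ≤ (D * ((1 + D) * Sy)) / lam := by
    intro n hn j
    have hnpos : (0 : ℝ) < (n : ℝ) := by exact_mod_cast (by omega : 0 < n)
    have h1 := hsum_le n hn (Finset.range j) (t n)
    have h2 : ∑ k ∈ Finset.range j, N n (t n k)
        ≤ ∑ k ∈ Finset.range j, (if n + 1 ≤ k then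
            (D * ((1 + D) * Sy)) * ((n : ℝ) ^ lam * (k : ℝ) ^ (-1 - lam)) else 0) :=
      Finset.sum_le_sum fun k _ => htN n hn k
    have h3 : ∑ k ∈ Finset.range j, (if n + 1 ≤ k then
          (D * ((1 + D) * Sy)) * ((n : ℝ) ^ lam * (k : ℝ) ^ (-1 - lam)) else 0)
        = ∑ k ∈ (Finset.range j).filter (fun k => n + 1 ≤ k),
          (D * ((1 + D) * Sy)) * ((n : ℝ) ^ lam * (k : ℝ) ^ (-1 - lam)) :=
      (Finset.sum_filter _ _).symm
    have h4 : ∑ k ∈ (Finset.range j).filter (fun k => n + 1 ≤ k),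
          (D * ((1 + D) * Sy)) * ((n : ℝ) ^ lam * (k : ℝ) ^ (-1 - lam))
        ≤ ∑ k ∈ Finset.Ioc n (n + j),
          (D * ((1 + D) * Sy)) * ((n : ℝ) ^ lam * (k : ℝ) ^ (-1 - lam)) := by
      apply Finset.sum_le_sum_of_subset_of_nonneg
      · intro k hk
        simp only [Finset.mem_filter, Finset.mem_range] at hk
        simp only [Finset.mem_Ioc]
        omega
      · intro k _ _
        have hkl : (0 : ℝ) ≤ (k : ℝ) ^ (-1 - lam) := Real.rpow_nonneg (by positivity) _
        have hnl : (0 : ℝ) ≤ (n : ℝ) ^ lam := Real.rpow_nonneg (by positivity) _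
        exact mul_nonneg hK0 (mul_nonneg hnl hkl)
    have h5 : ∑ k ∈ Finset.Ioc n (n + j),
          (D * ((1 + D) * Sy)) * ((n : ℝ) ^ lam * (k : ℝ) ^ (-1 - lam))
        = ((D * ((1 + D) * Sy)) * (n : ℝ) ^ lam) * ∑ k ∈ Finset.Ioc n (n + j),
          (k : ℝ) ^ (-1 - lam) := by
      rw [Finset.mul_sum]
      exact Finset.sum_congr rfl fun k _ => by ring
    have h6 := sum_rpow_Ioc_le hlam0 n hn (n + j)
    have h7 : ((D * ((1 + D) * Sy)) * (n : ℝ) ^ lam) * ∑ k ∈ Finset.Ioc n (n + j),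
          (k : ℝ) ^ (-1 - lam)
        ≤ ((D * ((1 + D) * Sy)) * (n : ℝ) ^ lam) * ((n : ℝ) ^ (-lam) / lam) := by
      apply mul_le_mul_of_nonneg_left h6
      exact mul_nonneg hK0 (Real.rpow_nonneg (by positivity) _)
    have e : (n : ℝ) ^ lam * (n : ℝ) ^ (-lam) = 1 := by
      rw [← Real.rpow_add hnpos]
      simp
    have h8 : ((D * ((1 + D) * Sy)) * (n : ℝ) ^ lam) * ((n : ℝ) ^ (-lam) / lam)
        = (D * ((1 + D) * Sy)) * ((n : ℝ) ^ lam * (n : ℝ) ^ (-lam)) / lam := by ring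
    rw [h8, e, mul_one] at h7
    linarith
  have hNtail : ∀ n, 1 ≤ n → N n (∑' k, t n k) ≤ (D * ((1 + D) * Sy)) / lam :=
    fun n hn => hNtsum_le n hn _ (hsummable n hn) _ (htail n hn)
  have hSbound : ∀ n, 1 ≤ n →
      N n (∑ k ∈ Finset.Icc 1 n, ((k : ℝ))⁻¹ • coc A k n (P k (y k))) ≤ (D * Sy) / lam := by
    intro n hn
    have hnpos : (0 : ℝ) < (n : ℝ) := by exact_mod_cast (by omega : 0 < n)
    have h1 := hsum_le n hn (Finset.Icc 1 n) (fun k => ((k : ℝ))⁻¹ • coc A k n (P k (y k)))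
    have h2 : ∑ k ∈ Finset.Icc 1 n, N n (((k : ℝ))⁻¹ • coc A k n (P k (y k)))
        ≤ ∑ k ∈ Finset.Icc 1 n, (D * Sy) * ((n : ℝ) ^ (-lam) * (k : ℝ) ^ (lam - 1)) := by
      apply Finset.sum_le_sum
      intro k hk
      obtain ⟨hk1, hk2⟩ := Finset.mem_Icc.1 hk
      exact hstterm n hn k hk1 hk2
    have h3 : ∑ k ∈ Finset.Icc 1 n, (D * Sy) * ((n : ℝ) ^ (-lam) * (k : ℝ) ^ (lam - 1))
        = ((D * Sy) * (n : ℝ) ^ (-lam)) * ∑ k ∈ Finset.Icc 1 n, (k : ℝ) ^ (lam - 1) := by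
      rw [Finset.mul_sum]
      exact Finset.sum_congr rfl fun k _ => by ring
    have h6 := sum_rpow_Icc_le hlam0 hlam1.le n hn
    have hDSy : 0 ≤ D * Sy := mul_nonneg hD.le hSy0
    have h7 : ((D * Sy) * (n : ℝ) ^ (-lam)) * ∑ k ∈ Finset.Icc 1 n, (k : ℝ) ^ (lam - 1)
        ≤ ((D * Sy) * (n : ℝ) ^ (-lam)) * ((n : ℝ) ^ lam / lam) :=
      mul_le_mul_of_nonneg_left h6 (mul_nonneg hDSy (Real.rpow_nonneg (by positivity) _))
    have e : (n : ℝ) ^ (-lam) * (n : ℝ) ^ lam = 1 := by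
      rw [← Real.rpow_add hnpos]
      simp
    have h8 : ((D * Sy) * (n : ℝ) ^ (-lam)) * ((n : ℝ) ^ lam / lam)
        = (D * Sy) * ((n : ℝ) ^ (-lam) * (n : ℝ) ^ lam) / lam := by ring
    rw [h8, e, mul_one] at h7
    rw [h3] at h2
    linarith
  intro x
  have hxdef : ∀ n : ℕ, x n = (∑ k ∈ Finset.Icc 1 n, ((k : ℝ))⁻¹ • coc A k n (P k (y k))) -
      ∑' k : ℕ, t n k := fun _ => rfl
  refine ⟨fun n hn => hsummable n hn, ?_, ?_, ?_⟩
  · -- MemY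
    refine ⟨(D * Sy) / lam + (D * ((1 + D) * Sy)) / lam, ?_⟩
    intro m hm
    rw [hxdef m, sub_eq_add_neg]
    refine le_trans (hadd m hm _ _) ?_
    rw [hneg m hm]
    exact add_le_add (hSbound m hm) (hNtail m hm)
  · -- x 1 ∈ range Q1
    refine ⟨x 1, ?_⟩
    have hP1 : P 1 (x 1) = 0 := by
      rw [hxdef 1, map_sub]
      have hS1 : (∑ k ∈ Finset.Icc (1:ℕ) 1, ((k : ℝ))⁻¹ • coc A k 1 (P k (y k))) = 0 := by
        rw [Finset.Icc_self, Finset.sum_singleton, hy1, map_zero, map_zero, smul_zero]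
      have hT1 : P 1 (∑' k, t 1 k) = 0 := by
        rw [(P 1).map_tsum (hsummable 1 le_rfl)]
        have : ∀ k : ℕ, P 1 (t 1 k) = 0 := by
          intro k
          rw [ht]
          by_cases hk : 1 + 1 ≤ k
          · simp only [if_pos hk, map_smul]
            rw [(hB 1 k le_rfl (by omega) _ (hQker k (by omega))).1, smul_zero]
          · simp only [if_neg hk, map_zero]
        rw [tsum_congr this, tsum_zero]
      rw [hS1, map_zero, hT1, sub_zero]
    show x 1 - P 1 (x 1) = x 1
    rw [hP1, sub_zero]
  · -- the equation
    intro n hn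
    show ((∑ k ∈ Finset.Icc 1 (n + 1), ((k : ℝ))⁻¹ • coc A k (n + 1) (P k (y k))) -
        ∑' k, t (n + 1) k) -
      A n ((∑ k ∈ Finset.Icc 1 n, ((k : ℝ))⁻¹ • coc A k n (P k (y k))) - ∑' k, t n k)
      = (((n : ℝ) + 1))⁻¹ • y (n + 1)
    have hAS : A n (∑ k ∈ Finset.Icc 1 n, ((k : ℝ))⁻¹ • coc A k n (P k (y k)))
        = ∑ k ∈ Finset.Icc 1 n, ((k : ℝ))⁻¹ • coc A k (n + 1) (P k (y k)) := by
      rw [map_sum]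
      refine Finset.sum_congr rfl fun k hk => ?_
      rw [map_smul, coc_succ' A (Finset.mem_Icc.1 hk).2]
    have hS1 : ∑ k ∈ Finset.Icc 1 (n + 1), ((k : ℝ))⁻¹ • coc A k (n + 1) (P k (y k))
        = (∑ k ∈ Finset.Icc 1 n, ((k : ℝ))⁻¹ • coc A k (n + 1) (P k (y k)))
          + ((n + 1 : ℕ) : ℝ)⁻¹ • P (n + 1) (y (n + 1)) := by
      rw [Finset.sum_Icc_succ_top (by omega), coc_self']
    have hAT : A n (∑' k, t n k)
        = ∑' k : ℕ, (if n + 1 ≤ k then ((k : ℝ))⁻¹ • B (n + 1) k (y k - P k (y k)) else 0) := by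
      rw [(A n).map_tsum (hsummable n hn)]
      refine tsum_congr fun k => ?_
      rw [ht]
      by_cases hk : n + 1 ≤ k
      · simp only [if_pos hk, map_smul, hBstep n k hn hk]
      · simp only [if_neg hk, map_zero]
    have hsplit : ∀ k : ℕ,
        (if n + 1 ≤ k then ((k : ℝ))⁻¹ • B (n + 1) k (y k - P k (y k)) else 0)
        = t (n + 1) k + (if k = n + 1 then
            ((n + 1 : ℕ) : ℝ)⁻¹ • B (n + 1) (n + 1) (y (n + 1) - P (n + 1) (y (n + 1))) else 0) := by
      intro k
      simp only [ht]
      by_cases h1 : k = n + 1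
      · subst h1
        rw [if_pos (le_refl (n + 1)), if_neg (by omega : ¬ (n + 1 + 1 ≤ n + 1)), if_pos rfl,
          zero_add]
      · by_cases h2 : n + 1 ≤ k
        · rw [if_pos h2, if_pos (by omega : n + 1 + 1 ≤ k), if_neg h1, add_zero]
        · rw [if_neg h2, if_neg (by omega : ¬ (n + 1 + 1 ≤ k)), if_neg h1, add_zero]
    have hsingle : Summable (fun k : ℕ => (if k = n + 1 then
        ((n + 1 : ℕ) : ℝ)⁻¹ • B (n + 1) (n + 1) (y (n + 1) - P (n + 1) (y (n + 1))) else 0 : X)) :=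
      (hasSum_ite_eq (n + 1) _).summable
    have hAT2 : A n (∑' k, t n k)
        = (∑' k, t (n + 1) k)
          + ((n + 1 : ℕ) : ℝ)⁻¹ • (y (n + 1) - P (n + 1) (y (n + 1))) := by
      rw [hAT, tsum_congr hsplit, Summable.tsum_add (hsummable (n + 1) (by omega)) hsingle,
        tsum_ite_eq, hBself (n + 1) (by omega)]
    rw [map_sub, hAS, hAT2, hS1]
    have hc : ((n + 1 : ℕ) : ℝ)⁻¹ = (((n : ℝ) + 1))⁻¹ := by push_cast; ring
    rw [hc, smul_sub]
    abel
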